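/- For every α ∈ (0,1) and every nonempty positive configuration v (a word over {1,2} with |v|₁ = |v|₂ all of whose prefixes contain at least as many letters 1 as letters 2, i.e., a Dyck word), one has φ_α(v) ≤ (1+|v|₁)^{α+1}. -/

import Mathlib

open scoped BigOperators ENNReal

attribute [local instance] Classical.propDecidable

namespace Cooling

/-- Words over the alphabet `{1,2}`, modeled as lists of booleans:
`true` encodes the letter `1`, `false` encodes the letter `2`. -/
abbrev Word := List Bool

/-- `w` is a configuration of length `2*n`: a word of length `2*n` with as many
occurrences of the letter `1` (`true`) as of the letter `2` (`false`). -/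
def IsConfig (n : ℕ) (w : Word) : Prop :=
  w.length = 2 * n ∧ w.count true = n

/-- The (finite) set `W_{2n}` of all configurations of length `2*n`. -/
def configSet (n : ℕ) : Finset Word :=
  ((Finset.univ : Finset (Fin (2 * n) → Bool)).image List.ofFn).filter
    (fun w => w.count true = n)

/-- The number `E(w)` of mismatches of `w`: positions `i` with `w_i = w_{i+1}`. -/
def mismatches (w : Word) : ℕ :=
  (w.zip w.tail).countP (fun p => p.1 == p.2)

/-- The number `F(w)` of flips performable on `w`: positions `i` with `w_i ≠ w_{i+1}`. -/
def flipCount (w : Word) : ℕ :=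
  (w.zip w.tail).countP (fun p => p.1 != p.2)

/-- The word `w^{(i)}` obtained from `w` by exchanging the letters at positions
`i` and `i+1` (0-indexed). -/
def flip (w : Word) (i : ℕ) : Word :=
  (w.set i (w.getD (i + 1) true)).set (i + 1) (w.getD i true)

/-- A flip is permitted at position `i` if both positions `i` and `i+1` exist and the
corresponding letters are different. -/
def CanFlip (w : Word) (i : ℕ) : Prop :=
  i + 1 < w.length ∧ w.getD i true ≠ w.getD (i + 1) true

/-- The set of positions at which a flip is allowed in the cooling process:
positions of permitted flips which do not increase the number of mismatches. -/
noncomputable def allowedFlips (w : Word) : Finset ℕ :=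
  (Finset.range w.length).filter
    (fun i => CanFlip w i ∧ mismatches (flip w i) ≤ mismatches w)

/-- One step of the cooling process: if `E(w) = 0`, stay at `w`; otherwise, perform
a flip chosen uniformly at random among the flips which do not increase the number
of mismatches. -/
noncomputable def coolStep (w : Word) : PMF Word :=
  if h : mismatches w ≠ 0 ∧ (allowedFlips w).Nonempty then
    (PMF.uniformOfFinset (allowedFlips w) h.2).map (flip w)
  else
    PMF.pure w

/-- The distribution of the cooling process at time `t`, started from `w`. -/
noncomputable def coolDist (w : Word) : ℕ → PMF Word
  | 0 => PMF.pure w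
  | t + 1 => (coolDist w t).bind coolStep

/-- The expected convergence time `E[T | w₀ = w]` of the cooling process started at `w`,
where `T = min {t ≥ 0 : E(w_t) = 0}`.  Since mismatch-free configurations are absorbing,
`E[T] = ∑_{t ≥ 0} P(T > t) = ∑_{t ≥ 0} P(E(w_t) ≠ 0)`. -/
noncomputable def expConvTime (w : Word) : ℝ≥0∞ :=
  ∑' t : ℕ, (coolDist w t).toOuterMeasure {v | mismatches v ≠ 0}

/-- The factor of `w` starting at position `s` (0-indexed) of length `l`. -/
def factor (w : Word) (s l : ℕ) : Word := (w.drop s).take l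

/-- The height `|p|₁ - |p|₂` of the length-`s` prefix `p` of `w`. -/
def height (w : Word) (s : ℕ) : ℤ :=
  ((w.take s).count true : ℤ) - (w.take s).count false

/-- The occurrence `(s, l)` is a positive Dyck factor of `w`. -/
def IsPosDyckAt (w : Word) (s l : ℕ) : Prop :=
  0 < l ∧ s + l ≤ w.length ∧
  (factor w s l).count true = (factor w s l).count false ∧
  (∀ i ≤ l, ((factor w s l).take i).count false ≤ ((factor w s l).take i).count true) ∧
  0 ≤ height w s

/-- The occurrence `(s, l)` is a negative Dyck factor of `w`. -/
def IsNegDyckAt (w : Word) (s l : ℕ) : Prop :=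
  0 < l ∧ s + l ≤ w.length ∧
  (factor w s l).count true = (factor w s l).count false ∧
  (∀ i ≤ l, ((factor w s l).take i).count true ≤ ((factor w s l).take i).count false) ∧
  height w s ≤ 0

/-- The occurrence `(s, l)` is a Dyck factor of `w` (positive or negative). -/
def IsDyckAt (w : Word) (s l : ℕ) : Prop :=
  IsPosDyckAt w s l ∨ IsNegDyckAt w s l

/-- The occurrence `(s, l)` is a maximal Dyck factor of `w`: no Dyck factor of `w`
with the same height contains it (other than itself). -/
def IsMaxDyckAt (w : Word) (s l : ℕ) : Prop :=
  IsDyckAt w s l ∧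
  ∀ s' l', IsDyckAt w s' l' → height w s' = height w s → s' ≤ s → s + l ≤ s' + l' →
    s' = s ∧ l' = l

/-- The set `DF(w)` of (occurrences of) maximal Dyck factors of `w`,
encoded as pairs (starting position, length). -/
noncomputable def DF (w : Word) : Finset (ℕ × ℕ) :=
  ((Finset.range (w.length + 1)) ×ˢ (Finset.range (w.length + 1))).filter
    (fun sl => IsMaxDyckAt w sl.1 sl.2)

/-- The variant `φ_α(w) = ∑_{v ∈ DF(w)} (1 + |v|₁)^α`. -/
noncomputable def phi (α : ℝ) (w : Word) : ℝ :=
  ∑ sl ∈ DF w, (1 + ((factor w sl.1 sl.2).count true : ℝ)) ^ α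

/-- The volume `V(w) = (1/2) ∑_{k=1}^{|w|} |h_{k-1}(w) + h_k(w)|`: the area between
the broken-line representation of `w` and the horizontal axis. -/
noncomputable def volume (w : Word) : ℝ :=
  (1 / 2) * ∑ k ∈ Finset.range w.length, |((height w k + height w (k + 1) : ℤ) : ℝ)|

/-- for a nonempty positive configuration (Dyck word) `v`,
one has `φ_α(v) ≤ (1 + |v|₁)^{α+1}`. -/
lemma count_true_eq_card (l : List Bool) :
    l.count true = ((Finset.range l.length).filter (fun i => l.getD i true = true)).card := by
  induction l with
  | nil => simp
  | cons a t ih =>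
    rw [List.count_cons, Finset.card_filter, List.length_cons, Finset.sum_range_succ']
    simp only [List.getD_cons_succ, List.getD_cons_zero]
    rw [← Finset.card_filter, ← ih]
    cases a <;> simp [add_comm]

/-- In a Dyck word, every Dyck factor starts at a position holding the letter `1`. -/
lemma dyck_start_true (v : Word)
    (hpre : ∀ i : ℕ, (v.take i).count false ≤ (v.take i).count true)
    (s l : ℕ) (h : IsDyckAt v s l) : s < v.length ∧ v.getD s true = true := by
  have hslt : s < v.length := by
    rcases h with ⟨hl, hsl, _⟩ | ⟨hl, hsl, _⟩ <;> omega
  refine ⟨hslt, ?_⟩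
  have hfac : ∀ m, l = m + 1 → factor v s l = v.getD s true :: ((v.drop (s+1)).take m) := by
    intro m hm
    subst hm
    unfold factor
    rw [List.drop_eq_getElem_cons hslt, List.take_succ_cons, List.getD_eq_getElem _ _ hslt]
  rcases h with ⟨hl, hsl, _, hpref, _⟩ | ⟨hl, hsl, _, hpref, hht⟩
  · -- positive: first-letter condition from the prefix inequality at i = 1
    obtain ⟨m, rfl⟩ : ∃ m, l = m + 1 := ⟨l - 1, by omega⟩
    have h1 := hpref 1 (by omega)
    rw [hfac m rfl] at h1
    cases hgd : v.getD s true with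
    | true => rfl
    | false => rw [hgd] at h1; simp at h1
  · -- negative: would force a prefix with more 2's than 1's
    exfalso
    obtain ⟨m, rfl⟩ : ∃ m, l = m + 1 := ⟨l - 1, by omega⟩
    have h1 := hpref 1 (by omega)
    rw [hfac m rfl] at h1
    have hgd : v.getD s true = false := by
      cases hgd : v.getD s true with
      | false => rfl
      | true => rw [hgd] at h1; simp at h1
    -- height v s ≤ 0 and hpre s give equality of counts at prefix s
    have hhs : (v.take s).count true ≤ (v.take s).count false := by
      unfold height at hht; omega
    have hps := hpre s
    -- counts at prefix (s+1)
    have hvs : v[s] = false := by rw [← List.getD_eq_getElem v true hslt]; exact hgd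
    have htake : v.take (s + 1) = v.take s ++ [false] := by
      rw [List.take_succ, List.getElem?_eq_getElem hslt, hvs]
      rfl
    have hps1 := hpre (s + 1)
    rw [htake, List.count_append, List.count_append] at hps1
    simp at hps1
    omega

theorem phi_le_of_positive (α : ℝ) (hα : α ∈ Set.Ioo (0 : ℝ) 1)
    (v : Word) (hne : v ≠ [])
    (hbal : v.count true = v.count false)
    (hpre : ∀ i : ℕ, (v.take i).count false ≤ (v.take i).count true) :
    phi α v ≤ (1 + (v.count true : ℝ)) ^ (α + 1) := by
  set n := v.count true with hn
  have hmem : ∀ sl ∈ DF v, IsMaxDyckAt v sl.1 sl.2 := by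
    intro sl hsl
    exact (Finset.mem_filter.mp hsl).2
  -- cardinality bound: at most one maximal Dyck factor per starting position,
  -- and each starting position holds the letter 1
  have hcard : (DF v).card ≤ n := by
    rw [hn, count_true_eq_card]
    apply Finset.card_le_card_of_injOn (fun sl => sl.1)
    · intro sl hsl
      have h := (hmem sl hsl).1
      have := dyck_start_true v hpre sl.1 sl.2 h
      simp only [Finset.coe_filter, Finset.mem_range, Set.mem_setOf_eq]
      exact this
    · intro a ha b hb hab
      have ha' := hmem a ha
      have hb' := hmem b hb
      simp only at hab
      have hsnd : a.2 = b.2 := by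
        rcases le_total a.2 b.2 with h | h
        · have := ha'.2 b.1 b.2 hb'.1 (by rw [hab]) (le_of_eq hab.symm) (by omega)
          omega
        · have := hb'.2 a.1 a.2 ha'.1 (by rw [hab]) (le_of_eq hab) (by omega)
          omega
      exact Prod.ext hab hsnd
  -- each term is at most (1+n)^α
  have hpos : (0:ℝ) < 1 + (n:ℝ) := by positivity
  have hterm : ∀ sl ∈ DF v,
      (1 + ((factor v sl.1 sl.2).count true : ℝ)) ^ α ≤ (1 + (n:ℝ)) ^ α := by
    intro sl hsl
    have hsub : List.Sublist (factor v sl.1 sl.2) v :=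
      (List.take_sublist _ _).trans (List.drop_sublist _ _)
    have hcnt : (factor v sl.1 sl.2).count true ≤ n := hsub.count_le true
    apply Real.rpow_le_rpow (by positivity)
    · have : ((factor v sl.1 sl.2).count true : ℝ) ≤ (n:ℝ) := by exact_mod_cast hcnt
      linarith
    · exact hα.1.le
  calc phi α v = ∑ sl ∈ DF v, (1 + ((factor v sl.1 sl.2).count true : ℝ)) ^ α := rfl
    _ ≤ (DF v).card • ((1 + (n:ℝ)) ^ α) :=
        Finset.sum_le_card_nsmul _ _ _ hterm
    _ = ((DF v).card : ℝ) * (1 + (n:ℝ)) ^ α := by rw [nsmul_eq_mul]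
    _ ≤ (1 + (n:ℝ)) * (1 + (n:ℝ)) ^ α := by
        apply mul_le_mul_of_nonneg_right _ (Real.rpow_nonneg hpos.le α)
        have : ((DF v).card : ℝ) ≤ (n : ℝ) := by exact_mod_cast hcard
        linarith
    _ = (1 + (n:ℝ)) ^ (α + 1) := by
        rw [Real.rpow_add hpos, Real.rpow_one, mul_comm]

end Cooling
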